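/- Consider the Common Atoms Model with parameters α, β > 0: let (π_k)_{k≥1} be GEM(α) weights and let (ω_{l,k})_{l≥1}, for k ≥ 1, be mutually independent GEM(β) weight sequences, with all stick variables jointly independent. Then E[∑_{k1≥1} ∑_{k2≥1} π_{k1} π_{k2} ∑_{l≥1} ω_{l,k1} ω_{l,k2}] = (1/(1+α))·(1/(1+β)) + (α/(1+α))·(1/(2β+1)). (This quantity is the probability P(y_{i,j} = y_{i',j'}) that two observations drawn from two distinct units of the Common Atoms Model with atomless base measure coincide.) -/

import Mathlib

open MeasureTheory ProbabilityTheory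
open scoped ENNReal

/-- The Beta(1, γ) distribution on [0,1]: density `x ↦ γ (1-x)^(γ-1)` w.r.t. Lebesgue
measure on `[0,1]`. -/
noncomputable def betaOne (γ : ℝ) : Measure ℝ :=
  (volume.restrict (Set.Icc (0:ℝ) 1)).withDensity
    fun x => ENNReal.ofReal (γ * (1 - x) ^ (γ - 1))

/-- Stick-breaking weights (0-indexed): `stick V k = V k * ∏_{i<k} (1 - V i)`. -/
noncomputable def stick {Ω : Type*} (V : ℕ → Ω → ℝ) (k : ℕ) (x : Ω) : ℝ :=
  V k x * ∏ i ∈ Finset.range k, (1 - V i x)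

namespace CamAux
open Finset

/-- measurability of tsum of nonneg measurable real functions -/
lemma measurable_tsum_nonneg {Ω : Type*} [MeasurableSpace Ω] {f : ℕ → Ω → ℝ}
    (hm : ∀ n, Measurable (f n)) (h0 : ∀ n x, 0 ≤ f n x) :
    Measurable (fun x => ∑' n, f n x) := by
  have he : (fun x => ∑' n, f n x) = fun x => (∑' n, ENNReal.ofReal (f n x)).toReal := by
    funext x
    by_cases hs : Summable fun n => f n x
    · rw [← ENNReal.ofReal_tsum_of_nonneg (fun n => h0 n x) hs,
        ENNReal.toReal_ofReal (tsum_nonneg fun n => h0 n x)]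
    · rw [tsum_eq_zero_of_not_summable hs]
      have ht : (∑' n, ENNReal.ofReal (f n x)) = ⊤ := by
        by_contra h
        apply hs
        have hsum := ENNReal.summable_toReal h
        simpa only [ENNReal.toReal_ofReal (h0 _ x)] using hsum
      simp [ht]
  rw [he]
  exact (Measurable.ennreal_tsum (fun n => ENNReal.measurable_ofReal.comp (hm n))).ennreal_toReal

variable {γ : ℝ}

lemma rho_measurable : Measurable (fun x : ℝ => ENNReal.ofReal (γ * (1 - x) ^ (γ - 1))) := by
  apply ENNReal.measurable_ofReal.comp
  exact (measurable_const.mul ((measurable_const.sub measurable_id).pow measurable_const))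

/-- pointwise combination on [0,1] -/
lemma rho_pow_eq (hγ : 0 < γ) (q : ℕ) {x : ℝ} (h0 : 0 ≤ x) (h1 : x ≤ 1) :
    (1 - x) ^ q * (γ * (1 - x) ^ (γ - 1)) = γ * (1 - x) ^ (γ - 1 + q) := by
  rcases lt_or_eq_of_le h1 with h | h
  · have hpos : 0 < 1 - x := by linarith
    rw [Real.rpow_add hpos, Real.rpow_natCast]
    ring
  · subst h
    simp only [sub_self]
    rcases Nat.eq_zero_or_pos q with hq | hq
    · simp [hq]
    · have hgt : (0:ℝ) < γ - 1 + q := by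
        have : (1:ℝ) ≤ q := by exact_mod_cast hq
        linarith
      rw [zero_pow hq.ne', Real.zero_rpow hgt.ne', zero_mul, mul_zero]

lemma intInt (hγ : 0 < γ) (q : ℕ) :
    IntervalIntegrable (fun x => (1 - x) ^ q * (γ * (1 - x) ^ (γ - 1))) volume 0 1 := by
  have h1 : IntervalIntegrable (fun x : ℝ => x ^ (γ - 1 + q)) volume 0 1 :=
    intervalIntegral.intervalIntegrable_rpow' (by push_cast; linarith)
  have h2 : IntervalIntegrable (fun x : ℝ => γ * (1 - x) ^ (γ - 1 + q)) volume 0 1 := by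
    have := ((h1.comp_sub_left 1).const_mul γ).symm
    simpa using this
  apply h2.congr
  have : Set.uIoc (0:ℝ) 1 ⊆ Set.Icc 0 1 := by
    rw [Set.uIoc_of_le zero_le_one]
    exact Set.Ioc_subset_Icc_self
  intro x hx
  have hx' := this hx
  exact (rho_pow_eq hγ q hx'.1 hx'.2).symm

lemma baseInt (hγ : 0 < γ) (q : ℕ) :
    ∫ x in (0:ℝ)..1, (1 - x) ^ q * (γ * (1 - x) ^ (γ - 1)) = γ / (γ + q) := by
  have hcong : ∫ x in (0:ℝ)..1, (1 - x) ^ q * (γ * (1 - x) ^ (γ - 1))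
      = ∫ x in (0:ℝ)..1, γ * (1 - x) ^ (γ - 1 + q) := by
    apply intervalIntegral.integral_congr
    intro x hx
    rw [Set.uIcc_of_le zero_le_one] at hx
    exact rho_pow_eq hγ q hx.1 hx.2
  rw [hcong, intervalIntegral.integral_const_mul]
  have hcomp : ∫ x in (0:ℝ)..1, (1 - x) ^ (γ - 1 + q) = ∫ x in (0:ℝ)..1, x ^ (γ - 1 + q) := by
    have := intervalIntegral.integral_comp_sub_left (a := 0) (b := 1)
      (fun x : ℝ => x ^ (γ - 1 + (q:ℝ))) 1
    simpa using this
  rw [hcomp, integral_rpow (Or.inl (by push_cast; linarith))]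
  have h1 : γ - 1 + q + 1 = γ + q := by ring
  rw [h1, Real.one_rpow, Real.zero_rpow (by positivity)]
  ring

/-- the full real integrand integrable -/
lemma intIntP (hγ : 0 < γ) (p q : ℕ) :
    IntervalIntegrable (fun x => x ^ p * ((1 - x) ^ q * (γ * (1 - x) ^ (γ - 1)))) volume 0 1 :=
  (intInt hγ q).continuousOn_mul (Continuous.continuousOn (by continuity))

lemma momRed (hγ : 0 < γ) (p q : ℕ) :
    ∫ x in (0:ℝ)..1, x ^ (p+1) * ((1 - x) ^ q * (γ * (1 - x) ^ (γ - 1)))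
      = (∫ x in (0:ℝ)..1, x ^ p * ((1 - x) ^ q * (γ * (1 - x) ^ (γ - 1))))
        - ∫ x in (0:ℝ)..1, x ^ p * ((1 - x) ^ (q+1) * (γ * (1 - x) ^ (γ - 1))) := by
  rw [← intervalIntegral.integral_sub (intIntP hγ p q) (intIntP hγ p (q+1))]
  apply intervalIntegral.integral_congr
  intro x _
  ring

lemma mom0 (hγ : 0 < γ) (q : ℕ) :
    ∫ x in (0:ℝ)..1, x ^ 0 * ((1 - x) ^ q * (γ * (1 - x) ^ (γ - 1))) = γ / (γ + q) := by
  rw [← baseInt hγ q]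
  apply intervalIntegral.integral_congr
  intro x _; ring

/-- moment values, defined for p+q ≤ 2 -/
noncomputable def mval (γ : ℝ) : ℕ → ℕ → ℝ
  | 0, 0 => 1
  | 1, 0 => 1 / (1 + γ)
  | 0, 1 => γ / (1 + γ)
  | 2, 0 => 2 / ((1 + γ) * (2 + γ))
  | 1, 1 => γ / ((1 + γ) * (2 + γ))
  | 0, 2 => γ / (2 + γ)
  | _, _ => 0

lemma momVal (hγ : 0 < γ) (p q : ℕ) (h : p + q ≤ 2) :
    ∫ x in (0:ℝ)..1, x ^ p * ((1 - x) ^ q * (γ * (1 - x) ^ (γ - 1))) = mval γ p q := by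
  have h0 := mom0 hγ
  have e0 : γ + (0:ℕ) = γ := by push_cast; ring
  have e1 : γ + (1:ℕ) = 1 + γ := by push_cast; ring
  have e2 : γ + (2:ℕ) = 2 + γ := by push_cast; ring
  have hne1 : (1:ℝ) + γ ≠ 0 := by linarith
  have hne2 : (2:ℝ) + γ ≠ 0 := by linarith
  have hp : p ≤ 2 := by omega
  interval_cases p
  · have hq : q ≤ 2 := by omega
    interval_cases q
    · rw [h0 0, e0, mval]; field_simp
    · rw [h0 1, e1, mval]
    · rw [h0 2, e2, mval]
  · have hq : q ≤ 1 := by omega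
    interval_cases q
    · rw [show (1:ℕ) = 0 + 1 from rfl, momRed hγ 0 0, h0 0, h0 1, e0, e1, mval]
      field_simp
      ring
    · rw [show (1:ℕ) = 0 + 1 from rfl, momRed hγ 0 1, h0 1, h0 2, e1, e2, mval]
      field_simp
      ring
  · have hq : q ≤ 0 := by omega
    interval_cases q
    rw [show (2:ℕ) = 1 + 1 from rfl, momRed hγ 1 0,
      show (1:ℕ) = 0 + 1 from rfl, momRed hγ 0 0, momRed hγ 0 1, h0 0, h0 1, h0 2, e0, e1, e2, mval]
    field_simp
    ring

lemma betaOne_ae_Icc (hγ : 0 < γ) : ∀ᵐ y ∂(betaOne γ), y ∈ Set.Icc (0:ℝ) 1 := by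
  unfold betaOne
  exact (withDensity_absolutelyContinuous _ _) (ae_restrict_mem measurableSet_Icc)

lemma lint_betaOne (hγ : 0 < γ) (p q : ℕ) (h : p + q ≤ 2) :
    ∫⁻ y, ENNReal.ofReal (y ^ p * (1 - y) ^ q) ∂(betaOne γ) = ENNReal.ofReal (mval γ p q) := by
  unfold betaOne
  have hg : Measurable fun y : ℝ => ENNReal.ofReal (y ^ p * (1 - y) ^ q) :=
    ENNReal.measurable_ofReal.comp ((measurable_id.pow measurable_const).mul
      ((measurable_const.sub measurable_id).pow measurable_const))
  rw [lintegral_withDensity_eq_lintegral_mul _ rho_measurable hg]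
  have hcong : ∫⁻ x in Set.Icc (0:ℝ) 1,
        (ENNReal.ofReal (γ * (1 - x) ^ (γ - 1)) * ENNReal.ofReal (x ^ p * (1 - x) ^ q)) ∂volume
      = ∫⁻ x in Set.Icc (0:ℝ) 1,
        ENNReal.ofReal (x ^ p * ((1 - x) ^ q * (γ * (1 - x) ^ (γ - 1)))) ∂volume := by
    apply lintegral_congr_ae
    filter_upwards [ae_restrict_mem measurableSet_Icc] with x hx
    have h1 : (0:ℝ) ≤ 1 - x := by linarith [hx.2]
    have h2 : (0:ℝ) ≤ γ * (1 - x) ^ (γ - 1) := by positivity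
    rw [← ENNReal.ofReal_mul h2]
    congr 1
    ring
  rw [show (fun a => ((fun x => ENNReal.ofReal (γ * (1 - x) ^ (γ - 1))) *
      (fun y => ENNReal.ofReal (y ^ p * (1 - y) ^ q))) a)
    = fun x => ENNReal.ofReal (γ * (1 - x) ^ (γ - 1)) * ENNReal.ofReal (x ^ p * (1 - x) ^ q)
    from rfl, hcong]
  have hInt : IntegrableOn (fun x => x ^ p * ((1 - x) ^ q * (γ * (1 - x) ^ (γ - 1))))
      (Set.Icc (0:ℝ) 1) volume :=
    (intervalIntegrable_iff_integrableOn_Icc_of_le zero_le_one).mp (intIntP hγ p q)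
  rw [← ofReal_integral_eq_lintegral_ofReal hInt]
  · rw [← momVal hγ p q h, intervalIntegral.integral_of_le zero_le_one,
      MeasureTheory.integral_Icc_eq_integral_Ioc]
  · filter_upwards [ae_restrict_mem measurableSet_Icc] with x hx
    have h1 : (0:ℝ) ≤ 1 - x := by linarith [hx.2]
    have h2 : (0:ℝ) ≤ x := hx.1
    positivity

section Indep
variable {ι Ω : Type*} [MeasurableSpace Ω] {μ : Measure Ω} [IsProbabilityMeasure μ]

lemma lintegral_prod_indep {g : ι → Ω → ℝ≥0∞} (hm : ∀ i, Measurable (g i))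
    (hi : iIndepFun g μ) (s : Finset ι) :
    ∫⁻ ω, ∏ i ∈ s, g i ω ∂μ = ∏ i ∈ s, ∫⁻ ω, g i ω ∂μ := by
  classical
  induction s using Finset.induction with
  | empty => simp
  | @insert a s ha ih =>
    have hind : IndepFun (g a) (∏ j ∈ s, g j) μ :=
      (hi.indepFun_finsetProd_of_notMem hm ha).symm
    have hprodm : Measurable fun ω => ∏ j ∈ s, g j ω := by
      apply Finset.measurable_prod
      exact fun i _ => hm i
    have hind' : IndepFun (g a) (fun ω => ∏ j ∈ s, g j ω) μ := by
      have : (∏ j ∈ s, g j) = fun ω => ∏ j ∈ s, g j ω := by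
        funext ω; simp [Finset.prod_apply]
      rwa [this] at hind
    simp_rw [Finset.prod_insert ha]
    rw [lintegral_mul_eq_lintegral_mul_lintegral_of_indepFun'' (hm a).aemeasurable
      hprodm.aemeasurable hind', ih]

end Indep

section Split

abbrev Idx := ℕ ⊕ ℕ × ℕ

def sdiag (k l : ℕ) : Finset Idx :=
  ((range (k+1)).image Sum.inl) ∪ ((range (l+1)).image (fun b => Sum.inr (k, b)))

def soff (k1 k2 l : ℕ) : Finset Idx :=
  ((range (k2+1)).image Sum.inl) ∪ ((range (l+1)).image (fun b => Sum.inr (k1, b)))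
    ∪ ((range (l+1)).image (fun b => Sum.inr (k2, b)))

variable {M : Type*} [CommMonoid M]

lemma prod_sdiag (k l : ℕ) (f : Idx → M) :
    ∏ i ∈ sdiag k l, f i
      = (f (Sum.inl k) * ∏ i ∈ range k, f (Sum.inl i))
        * (f (Sum.inr (k, l)) * ∏ b ∈ range l, f (Sum.inr (k, b))) := by
  rw [sdiag, Finset.prod_union (by simp [Finset.disjoint_left])]
  rw [Finset.prod_image (by simp), Finset.prod_image (by simp)]
  rw [Finset.prod_range_succ, Finset.prod_range_succ]
  ac_rfl

lemma prod_soff {k1 k2 : ℕ} (h : k1 < k2) (l : ℕ) (f : Idx → M) :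
    ∏ i ∈ soff k1 k2 l, f i
      = (f (Sum.inl k1) * f (Sum.inl k2)
          * (∏ i ∈ range k1, f (Sum.inl i)) * ∏ i ∈ Finset.Ico (k1+1) k2, f (Sum.inl i))
        * (f (Sum.inr (k1, l)) * ∏ b ∈ range l, f (Sum.inr (k1, b)))
        * (f (Sum.inr (k2, l)) * ∏ b ∈ range l, f (Sum.inr (k2, b))) := by
  have hd1 : Disjoint ((range (k2+1)).image (Sum.inl : ℕ → Idx))
      ((range (l+1)).image (fun b => Sum.inr (k1, b))) := by
    simp [Finset.disjoint_left]
  have hd2 : Disjoint (((range (k2+1)).image (Sum.inl : ℕ → Idx))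
        ∪ ((range (l+1)).image (fun b => Sum.inr (k1, b))))
      ((range (l+1)).image (fun b => Sum.inr (k2, b))) := by
    simp only [Finset.disjoint_left, Finset.mem_union, Finset.mem_image, Finset.mem_range]
    rintro x (⟨i, _, rfl⟩ | ⟨b, _, rfl⟩) ⟨b', _, hx⟩
    · exact absurd hx (by simp)
    · simp only [Sum.inr.injEq, Prod.mk.injEq] at hx
      exact absurd hx.1.symm h.ne
  rw [soff, Finset.prod_union hd2, Finset.prod_union hd1]
  rw [Finset.prod_image (by simp), Finset.prod_image (by simp), Finset.prod_image (by simp)]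
  have hV : ∏ i ∈ range (k2+1), f (Sum.inl i)
      = f (Sum.inl k1) * f (Sum.inl k2)
        * (∏ i ∈ range k1, f (Sum.inl i)) * ∏ i ∈ Finset.Ico (k1+1) k2, f (Sum.inl i) := by
    rw [Finset.prod_range_succ, Finset.range_eq_Ico,
      ← Finset.prod_Ico_consecutive (fun i => f (Sum.inl i)) (Nat.zero_le (k1+1)) h,
      Finset.prod_Ico_succ_top (Nat.zero_le k1), ← Finset.range_eq_Ico]
    ac_rfl
  rw [hV, Finset.prod_range_succ, Finset.prod_range_succ]
  ac_rfl

end Split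

section Sums

/-- value of `E[π_{k1} π_{k2} ω_{l,k1} ω_{l,k2}]` -/
noncomputable def tval (α β : ℝ) (k1 k2 l : ℕ) : ℝ :=
  if k1 = k2 then
    2 / ((1+α)*(2+α)) * (α/(2+α))^k1 * (2 / ((1+β)*(2+β)) * (β/(2+β))^l)
  else
    α / ((1+α)*(2+α)) * (α/(2+α))^(min k1 k2) * (α/(1+α))^(max k1 k2 - min k1 k2 - 1)
      * (1/(1+α)) * ((1/(1+β)) * (β/(1+β))^l)^2

/-- value after summing over `l` -/
noncomputable def uval (α β : ℝ) (k1 k2 : ℕ) : ℝ :=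
  if k1 = k2 then
    2 / ((1+α)*(2+α)) * (α/(2+α))^k1 * (2 / ((1+β)*(2+β)) * (1 - β/(2+β))⁻¹)
  else
    α / ((1+α)*(2+α)) * (α/(2+α))^(min k1 k2) * (α/(1+α))^(max k1 k2 - min k1 k2 - 1)
      * (1/(1+α)) * ((1/(1+β))^2 * (1 - (β/(1+β))^2)⁻¹)

variable {α β : ℝ}

lemma geom_facts (hα : 0 < α) : 0 ≤ α/(2+α) ∧ α/(2+α) < 1 ∧ 0 ≤ α/(1+α) ∧ α/(1+α) < 1 := by
  refine ⟨by positivity, ?_, by positivity, ?_⟩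
  · rw [div_lt_one (by linarith)]; linarith
  · rw [div_lt_one (by linarith)]; linarith

lemma tval_sum_l (hα : 0 < α) (hβ : 0 < β) (k1 k2 : ℕ) :
    ∑' (l : ℕ), ENNReal.ofReal (tval α β k1 k2 l) = ENNReal.ofReal (uval α β k1 k2) := by
  obtain ⟨hb0, hb1, he0, he1⟩ := geom_facts hβ
  by_cases h : k1 = k2
  · have hfe : ∀ l : ℕ, tval α β k1 k2 l
        = (2 / ((1+α)*(2+α)) * (α/(2+α))^k1 * (2 / ((1+β)*(2+β)))) * (β/(2+β))^l := by
      intro l; simp only [tval, if_pos h]; ring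
    have hsum : Summable (fun l : ℕ => (β/(2+β))^l) := summable_geometric_of_lt_one hb0 hb1
    have hnn : ∀ l : ℕ, 0 ≤ tval α β k1 k2 l := by
      intro l; rw [hfe]; positivity
    rw [← ENNReal.ofReal_tsum_of_nonneg hnn
      ((hsum.mul_left _).congr (fun l => (hfe l).symm))]
    congr 1
    rw [tsum_congr hfe, tsum_mul_left, tsum_geometric_of_lt_one hb0 hb1]
    simp only [uval, if_pos h]; ring
  · have he20 : (0:ℝ) ≤ (β/(1+β))^2 := by positivity
    have he21 : (β/(1+β))^2 < 1 := by
      calc (β/(1+β))^2 ≤ β/(1+β) * 1 := by rw [pow_two]; gcongr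
        _ < 1 := by rw [mul_one]; exact he1
    have hfe : ∀ l : ℕ, tval α β k1 k2 l
        = (α / ((1+α)*(2+α)) * (α/(2+α))^(min k1 k2)
            * (α/(1+α))^(max k1 k2 - min k1 k2 - 1) * (1/(1+α)) * (1/(1+β))^2)
            * ((β/(1+β))^2)^l := by
      intro l; simp only [tval, if_neg h]; ring
    have hsum : Summable (fun l : ℕ => ((β/(1+β))^2)^l) := summable_geometric_of_lt_one he20 he21
    have hnn : ∀ l : ℕ, 0 ≤ tval α β k1 k2 l := by
      intro l; rw [hfe]
      have h1 : (0:ℝ) ≤ (α/(2+α))^(min k1 k2) := by positivity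
      have h2 : (0:ℝ) ≤ (α/(1+α))^(max k1 k2 - min k1 k2 - 1) := by positivity
      positivity
    rw [← ENNReal.ofReal_tsum_of_nonneg hnn
      ((hsum.mul_left _).congr (fun l => (hfe l).symm))]
    congr 1
    rw [tsum_congr hfe, tsum_mul_left, tsum_geometric_of_lt_one he20 he21]
    simp only [uval, if_neg h]; ring

noncomputable def Kc (α β : ℝ) : ℝ :=
  α / ((1+α)*(2+α)) * (1/(1+α)) * ((1/(1+β))^2 * (1 - (β/(1+β))^2)⁻¹)

noncomputable def Dc (α β : ℝ) : ℝ :=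
  2 / ((1+α)*(2+α)) * (2 / ((1+β)*(2+β)) * (1 - β/(2+β))⁻¹)

noncomputable def Ac (α β : ℝ) : ℝ :=
  Dc α β + Kc α β * (α/(2+α) - α/(1+α))⁻¹ + Kc α β * (1 - α/(1+α))⁻¹

noncomputable def Bc (α β : ℝ) : ℝ := -(Kc α β * (α/(2+α) - α/(1+α))⁻¹)

lemma Kc_nonneg (hα : 0 < α) (hβ : 0 < β) : 0 ≤ Kc α β := by
  have h1 : (β/(1+β))^2 < 1 := by
    have : β/(1+β) < 1 := by rw [div_lt_one (by linarith)]; linarith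
    calc (β/(1+β))^2 ≤ β/(1+β) * 1 := by rw [pow_two]; gcongr
      _ < 1 := by rw [mul_one]; exact this
  have h2 : (0:ℝ) < 1 - (β/(1+β))^2 := by linarith
  unfold Kc; positivity

lemma Dc_nonneg (hα : 0 < α) (hβ : 0 < β) : 0 ≤ Dc α β := by
  have h1 : β/(2+β) < 1 := by rw [div_lt_one (by linarith)]; linarith
  have h2 : (0:ℝ) < 1 - β/(2+β) := by linarith
  unfold Dc; positivity

lemma Qo_nonneg (hβ : 0 < β) : 0 ≤ (1/(1+β))^2 * (1 - (β/(1+β))^2)⁻¹ := by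
  have h1 : (β/(1+β))^2 < 1 := by
    have h : β/(1+β) < 1 := by rw [div_lt_one (by linarith)]; linarith
    calc (β/(1+β))^2 ≤ β/(1+β) * 1 := by rw [pow_two]; gcongr
      _ < 1 := by rw [mul_one]; exact h
  exact mul_nonneg (by positivity) (inv_nonneg.mpr (by linarith))

lemma Qd_nonneg (hβ : 0 < β) : 0 ≤ 2 / ((1+β)*(2+β)) * (1 - β/(2+β))⁻¹ := by
  have h1 : β/(2+β) < 1 := by rw [div_lt_one (by linarith)]; linarith
  exact mul_nonneg (by positivity) (inv_nonneg.mpr (by linarith))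

lemma uval_nonneg (hα : 0 < α) (hβ : 0 < β) (k1 k2 : ℕ) : 0 ≤ uval α β k1 k2 := by
  unfold uval
  split
  · exact mul_nonneg (mul_nonneg (by positivity) (by positivity)) (Qd_nonneg hβ)
  · refine mul_nonneg (mul_nonneg (mul_nonneg (mul_nonneg (by positivity) ?_) ?_)
      (by positivity)) (Qo_nonneg hβ)
    · positivity
    · positivity

lemma sub_ne (hα : 0 < α) : α/(2+α) - α/(1+α) ≠ 0 := by
  have h : α/(2+α) < α/(1+α) := by
    apply div_lt_div_of_pos_left hα (by linarith) (by linarith)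
  linarith

lemma uval_shift (hα : 0 < α) (hβ : 0 < β) (k1 j : ℕ) :
    uval α β k1 (j + (k1+1)) = (Kc α β * (α/(2+α))^k1) * (α/(1+α))^j := by
  unfold uval Kc
  rw [if_neg (by omega), min_eq_left (by omega), max_eq_right (by omega),
    show j + (k1+1) - k1 - 1 = j by omega]
  ring

lemma uval_summable (hα : 0 < α) (hβ : 0 < β) (k1 : ℕ) : Summable (uval α β k1) := by
  obtain ⟨ha0, ha1, hd0, hd1⟩ := geom_facts hα
  have hgeo : Summable (fun j : ℕ => (α/(1+α))^j) := summable_geometric_of_lt_one hd0 hd1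
  have hshift : Summable (fun j => uval α β k1 (j + (k1+1))) :=
    (hgeo.mul_left _).congr (fun j => (uval_shift hα hβ k1 j).symm)
  exact (summable_nat_add_iff (k1+1)).mp hshift

lemma uval_tsum_real (hα : 0 < α) (hβ : 0 < β) (k1 : ℕ) :
    ∑' (k2 : ℕ), uval α β k1 k2
      = Ac α β * (α/(2+α))^k1 + Bc α β * (α/(1+α))^k1 := by
  obtain ⟨ha0, ha1, hd0, hd1⟩ := geom_facts hα
  have hsummable := uval_summable hα hβ k1
  rw [← Summable.sum_add_tsum_nat_add (k1+1) hsummable]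
  have htail : ∑' (j : ℕ), uval α β k1 (j + (k1+1))
      = Kc α β * (α/(2+α))^k1 * (1 - α/(1+α))⁻¹ := by
    rw [tsum_congr (uval_shift hα hβ k1), tsum_mul_left,
      tsum_geometric_of_lt_one hd0 hd1]
  have hfin : ∑ k2 ∈ range (k1+1), uval α β k1 k2
      = Kc α β * (((α/(2+α))^k1 - (α/(1+α))^k1) / (α/(2+α) - α/(1+α)))
        + Dc α β * (α/(2+α))^k1 := by
    rw [Finset.sum_range_succ]
    have hdiag : uval α β k1 k1 = Dc α β * (α/(2+α))^k1 := by
      unfold uval Dc; rw [if_pos rfl]; ring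
    have hoff : ∀ k2 ∈ range k1, uval α β k1 k2
        = Kc α β * ((α/(2+α))^k2 * (α/(1+α))^(k1 - 1 - k2)) := by
      intro k2 hk2
      rw [Finset.mem_range] at hk2
      unfold uval Kc
      rw [if_neg (by omega), min_eq_right (by omega), max_eq_left (by omega),
        show k1 - k2 - 1 = k1 - 1 - k2 by omega]
      ring
    rw [Finset.sum_congr rfl hoff, ← Finset.mul_sum]
    have hgs := geom_sum₂_mul (α/(2+α)) (α/(1+α)) k1
    have heq : ∑ i ∈ range k1, (α/(2+α))^i * (α/(1+α))^(k1-1-i)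
        = ((α/(2+α))^k1 - (α/(1+α))^k1) / (α/(2+α) - α/(1+α)) := by
      rw [eq_div_iff (sub_ne hα)]
      exact hgs
    rw [heq, hdiag]
  rw [htail, hfin]
  unfold Ac Bc
  ring

lemma uval_sum_k2 (hα : 0 < α) (hβ : 0 < β) (k1 : ℕ) :
    ∑' (k2 : ℕ), ENNReal.ofReal (uval α β k1 k2)
      = ENNReal.ofReal (Ac α β * (α/(2+α))^k1 + Bc α β * (α/(1+α))^k1) := by
  rw [← ENNReal.ofReal_tsum_of_nonneg (uval_nonneg hα hβ k1) (uval_summable hα hβ k1)]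
  exact congrArg _ (uval_tsum_real hα hβ k1)

set_option maxHeartbeats 2000000 in
lemma final_sum (hα : 0 < α) (hβ : 0 < β) :
    ∑' (k1 : ℕ), ∑' (k2 : ℕ), ∑' (l : ℕ), ENNReal.ofReal (tval α β k1 k2 l)
      = ENNReal.ofReal (1/(1+α) * (1/(1+β)) + α/(1+α) * (1/(2*β+1))) := by
  obtain ⟨ha0, ha1, hd0, hd1⟩ := geom_facts hα
  have h1 : ∀ k1 : ℕ, ∑' (k2 : ℕ), ∑' (l : ℕ), ENNReal.ofReal (tval α β k1 k2 l)
      = ENNReal.ofReal (Ac α β * (α/(2+α))^k1 + Bc α β * (α/(1+α))^k1) := by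
    intro k1
    rw [tsum_congr (fun k2 => tval_sum_l hα hβ k1 k2), uval_sum_k2 hα hβ k1]
  rw [tsum_congr h1]
  have hs1 : Summable (fun k1 : ℕ => Ac α β * (α/(2+α))^k1) :=
    (summable_geometric_of_lt_one ha0 ha1).mul_left _
  have hs2 : Summable (fun k1 : ℕ => Bc α β * (α/(1+α))^k1) :=
    (summable_geometric_of_lt_one hd0 hd1).mul_left _
  have hnn : ∀ k1 : ℕ, 0 ≤ Ac α β * (α/(2+α))^k1 + Bc α β * (α/(1+α))^k1 := by
    intro k1
    rw [← uval_tsum_real hα hβ k1]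
    exact tsum_nonneg (fun k2 => uval_nonneg hα hβ k1 k2)
  rw [← ENNReal.ofReal_tsum_of_nonneg hnn (hs1.add hs2)]
  congr 1
  rw [Summable.tsum_add hs1 hs2, tsum_mul_left, tsum_mul_left,
    tsum_geometric_of_lt_one ha0 ha1, tsum_geometric_of_lt_one hd0 hd1]
  have h1a : (1:ℝ) + α ≠ 0 := by linarith
  have h2a : (2:ℝ) + α ≠ 0 := by linarith
  have h1b : (1:ℝ) + β ≠ 0 := by linarith
  have h2b : (2:ℝ) + β ≠ 0 := by linarith
  have h2b1 : (2:ℝ)*β + 1 ≠ 0 := by linarith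
  have hga : (1:ℝ) - α/(2+α) ≠ 0 := by
    have : α/(2+α) < 1 := ha1; linarith
  have hgd : (1:ℝ) - α/(1+α) ≠ 0 := by
    have : α/(1+α) < 1 := hd1; linarith
  have hgb : (1:ℝ) - β/(2+β) ≠ 0 := by
    have : β/(2+β) < 1 := by rw [div_lt_one (by linarith)]; linarith
    linarith
  have hge : (1:ℝ) - (β/(1+β))^2 ≠ 0 := by
    have h : β/(1+β) < 1 := by rw [div_lt_one (by linarith)]; linarith
    have h0 : (0:ℝ) ≤ β/(1+β) := by positivity
    have : (β/(1+β))^2 < 1 := by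
      calc (β/(1+β))^2 ≤ β/(1+β) * 1 := by rw [pow_two]; gcongr
        _ < 1 := by rw [mul_one]; exact h
    linarith
  have e1 : ((1:ℝ) - α/(2+α))⁻¹ = (2+α)/2 := by
    rw [show (1:ℝ) - α/(2+α) = 2/(2+α) from by field_simp; ring, inv_div]
  have e2 : ((1:ℝ) - α/(1+α))⁻¹ = 1+α := by
    rw [show (1:ℝ) - α/(1+α) = 1/(1+α) from by field_simp; ring, inv_div, div_one]
  have e3 : (α/(2+α) - α/(1+α))⁻¹ = -(((1+α)*(2+α))/α) := by
    rw [show α/(2+α) - α/(1+α) = -(α/((1+α)*(2+α))) from by field_simp; ring, inv_neg, inv_div]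
  have e4 : ((1:ℝ) - β/(2+β))⁻¹ = (2+β)/2 := by
    rw [show (1:ℝ) - β/(2+β) = 2/(2+β) from by field_simp; ring, inv_div]
  have e5 : ((1:ℝ) - (β/(1+β))^2)⁻¹ = (1+β)^2/(2*β+1) := by
    rw [show (1:ℝ) - (β/(1+β))^2 = (2*β+1)/(1+β)^2 from by field_simp; ring, inv_div]
  unfold Ac Bc Kc Dc
  rw [e1, e2, e3, e4, e5]
  field_simp
  ring

end Sums

section Stick

def cl (t : ℝ) : ℝ := max 0 (min 1 t)

lemma cl_nonneg (t : ℝ) : 0 ≤ cl t := le_max_left _ _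

lemma cl_le_one (t : ℝ) : cl t ≤ 1 := max_le zero_le_one (min_le_left _ _)

lemma measurable_cl : Measurable cl :=
  measurable_const.max (measurable_const.min measurable_id)

lemma cl_eq_of_mem {t : ℝ} (h : t ∈ Set.Icc (0:ℝ) 1) : cl t = t := by
  rw [cl, min_eq_right h.2, max_eq_right h.1]

variable {Ω : Type*} {U : ℕ → Ω → ℝ} {x : Ω}

lemma sum_stick_eq (U : ℕ → Ω → ℝ) (x : Ω) (n : ℕ) :
    ∑ i ∈ range n, stick U i x = 1 - ∏ i ∈ range n, (1 - U i x) := by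
  induction n with
  | zero => simp
  | succ n ih =>
    rw [Finset.sum_range_succ, Finset.prod_range_succ, ih, stick]
    ring

lemma stick_nonneg (hU : ∀ k, 0 ≤ U k x ∧ U k x ≤ 1) (k : ℕ) : 0 ≤ stick U k x :=
  mul_nonneg (hU k).1 (Finset.prod_nonneg fun i _ => by linarith [(hU i).2])

lemma stick_le_one (hU : ∀ k, 0 ≤ U k x ∧ U k x ≤ 1) (k : ℕ) : stick U k x ≤ 1 := by
  rw [stick]
  apply mul_le_one₀ (hU k).2 (Finset.prod_nonneg fun i _ => by linarith [(hU i).2])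
  apply Finset.prod_le_one (fun i _ => by linarith [(hU i).2]) (fun i _ => by linarith [(hU i).1])

lemma sum_stick_le_one (hU : ∀ k, 0 ≤ U k x ∧ U k x ≤ 1) (n : ℕ) :
    ∑ i ∈ range n, stick U i x ≤ 1 := by
  rw [sum_stick_eq]
  have : 0 ≤ ∏ i ∈ range n, (1 - U i x) :=
    Finset.prod_nonneg fun i _ => by linarith [(hU i).2]
  linarith

lemma stick_summable (hU : ∀ k, 0 ≤ U k x ∧ U k x ≤ 1) :
    Summable (fun k => stick U k x) :=
  summable_of_sum_range_le (stick_nonneg hU) (sum_stick_le_one hU)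

lemma tsum_stick_le_one (hU : ∀ k, 0 ≤ U k x ∧ U k x ≤ 1) :
    ∑' k, stick U k x ≤ 1 :=
  Real.tsum_le_of_sum_range_le (stick_nonneg hU) (sum_stick_le_one hU)

lemma stick_measurable [MeasurableSpace Ω] (hU : ∀ k, Measurable (U k)) (k : ℕ) :
    Measurable (fun x => stick U k x) := by
  apply (hU k).mul
  apply Finset.measurable_prod
  exact fun i _ => measurable_const.sub (hU i)

end Stick

lemma mval_nonneg {γ : ℝ} (hγ : 0 < γ) (p q : ℕ) : 0 ≤ mval γ p q := by
  have h1 : (0:ℝ) < 1 + γ := by linarith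
  have h2 : (0:ℝ) < 2 + γ := by linarith
  unfold mval
  split
  · norm_num
  · positivity
  · positivity
  · positivity
  · positivity
  · positivity
  · norm_num

lemma tval_comm (α β : ℝ) (k1 k2 l : ℕ) : tval α β k1 k2 l = tval α β k2 k1 l := by
  unfold tval
  rcases eq_or_ne k1 k2 with h | h
  · subst h; rfl
  · rw [if_neg h, if_neg (Ne.symm h), min_comm, max_comm]

end CamAux

open CamAux Finset

/-- In the Common Atoms Model with GEM(α) distributional weights (π_k)
and mutually independent GEM(β) observational weight sequences (ω_{l,k})_l, jointly
independent of the π-sticks,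
`E[∑_{k1,k2} π_{k1} π_{k2} ∑_l ω_{l,k1} ω_{l,k2}] = (1/(1+α))(1/(1+β)) + (α/(1+α))(1/(2β+1))`,
the probability of a tie between observations in two distinct units. Joint independence
of all stick variables is encoded by `iIndepFun` over `ℕ ⊕ (ℕ × ℕ)`. -/
theorem cam_tie_probability {Ω : Type*} [MeasurableSpace Ω] (μ : Measure Ω)
    [IsProbabilityMeasure μ] (α β : ℝ) (hα : 0 < α) (hβ : 0 < β)
    (V : ℕ → Ω → ℝ) (W : ℕ → ℕ → Ω → ℝ)
    (hmV : ∀ k, Measurable (V k)) (hmW : ∀ k l, Measurable (W k l))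
    (hlawV : ∀ k, μ.map (V k) = betaOne α)
    (hlawW : ∀ k l, μ.map (W k l) = betaOne β)
    (hindep : iIndepFun
      (Sum.elim V (fun p : ℕ × ℕ => W p.1 p.2)) μ) :
    ∫ x, (∑' (k1 : ℕ) (k2 : ℕ), stick V k1 x * stick V k2 x *
        ∑' l : ℕ, stick (W k1) l x * stick (W k2) l x) ∂μ
      = 1 / (1 + α) * (1 / (1 + β)) + α / (1 + α) * (1 / (2 * β + 1)) := by
  classical
  -- clamped processes
  set V' : ℕ → Ω → ℝ := fun k x => cl (V k x) with hV'def
  set W' : ℕ → ℕ → Ω → ℝ := fun k l x => cl (W k l x) with hW'def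
  have hmV' : ∀ k, Measurable (V' k) := fun k => measurable_cl.comp (hmV k)
  have hmW' : ∀ k l, Measurable (W' k l) := fun k l => measurable_cl.comp (hmW k l)
  have hbV' : ∀ (x : Ω) (k : ℕ), 0 ≤ V' k x ∧ V' k x ≤ 1 :=
    fun x k => ⟨cl_nonneg _, cl_le_one _⟩
  have hbW' : ∀ (k : ℕ) (x : Ω) (l : ℕ), 0 ≤ W' k l x ∧ W' k l x ≤ 1 :=
    fun k x l => ⟨cl_nonneg _, cl_le_one _⟩
  -- a.e. equalities
  have haeV : ∀ k, V' k =ᵐ[μ] V k := by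
    intro k
    have h1 : ∀ᵐ x ∂μ, V k x ∈ Set.Icc (0:ℝ) 1 := by
      have h2 : ∀ᵐ y ∂(μ.map (V k)), y ∈ Set.Icc (0:ℝ) 1 := by
        rw [hlawV k]; exact betaOne_ae_Icc hα
      exact (ae_map_iff (hmV k).aemeasurable measurableSet_Icc).mp h2
    filter_upwards [h1] with x hx using cl_eq_of_mem hx
  have haeW : ∀ k l, W' k l =ᵐ[μ] W k l := by
    intro k l
    have h1 : ∀ᵐ x ∂μ, W k l x ∈ Set.Icc (0:ℝ) 1 := by
      have h2 : ∀ᵐ y ∂(μ.map (W k l)), y ∈ Set.Icc (0:ℝ) 1 := by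
        rw [hlawW k l]; exact betaOne_ae_Icc hβ
      exact (ae_map_iff (hmW k l).aemeasurable measurableSet_Icc).mp h2
    filter_upwards [h1] with x hx using cl_eq_of_mem hx
  have hlawV' : ∀ k, μ.map (V' k) = betaOne α := by
    intro k; rw [Measure.map_congr (haeV k), hlawV k]
  have hlawW' : ∀ k l, μ.map (W' k l) = betaOne β := by
    intro k l; rw [Measure.map_congr (haeW k l), hlawW k l]
  -- combined family
  set X : (ℕ ⊕ ℕ × ℕ) → Ω → ℝ := Sum.elim V' (fun p => W' p.1 p.2) with hXdef
  have hmX : ∀ i, Measurable (X i) := by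
    rintro (k | ⟨k, l⟩)
    exacts [hmV' k, hmW' k l]
  have hbX : ∀ i x, 0 ≤ X i x ∧ X i x ≤ 1 := by
    rintro (k | ⟨k, l⟩) x
    exacts [hbV' x k, hbW' k x l]
  have hindepX : iIndepFun X μ := by
    have h := hindep.comp (fun _ => cl) (fun _ => measurable_cl)
    have he : X = fun i => cl ∘ (Sum.elim V (fun p : ℕ × ℕ => W p.1 p.2) i) := by
      funext i
      cases i <;> rfl
    rwa [he]
  have hlawX : ∀ i, μ.map (X i) = betaOne (Sum.elim (fun _ : ℕ => α) (fun _ : ℕ × ℕ => β) i) := by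
    rintro (k | ⟨k, l⟩)
    exacts [hlawV' k, hlawW' k l]
  -- single-factor moments
  have hmom : ∀ (i : ℕ ⊕ ℕ × ℕ) (p q : ℕ), p + q ≤ 2 →
      ∫⁻ x, ENNReal.ofReal ((X i x) ^ p * (1 - X i x) ^ q) ∂μ
        = ENNReal.ofReal (mval (Sum.elim (fun _ : ℕ => α) (fun _ : ℕ × ℕ => β) i) p q) := by
    intro i p q hpq
    have hg : Measurable fun y : ℝ => ENNReal.ofReal (y ^ p * (1 - y) ^ q) :=
      ENNReal.measurable_ofReal.comp ((measurable_id.pow measurable_const).mul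
        ((measurable_const.sub measurable_id).pow measurable_const))
    have h1 : ∫⁻ x, ENNReal.ofReal ((X i x) ^ p * (1 - X i x) ^ q) ∂μ
        = ∫⁻ y, ENNReal.ofReal (y ^ p * (1 - y) ^ q) ∂(μ.map (X i)) :=
      (lintegral_map hg (hmX i)).symm
    rw [h1, hlawX i]
    rcases i with k | ⟨k, l⟩
    · exact lint_betaOne hα p q hpq
    · exact lint_betaOne hβ p q hpq
  -- factorization
  have hfact : ∀ (s : Finset (ℕ ⊕ ℕ × ℕ)) (e : (ℕ ⊕ ℕ × ℕ) → ℕ × ℕ),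
      ∫⁻ x, ∏ i ∈ s, ENNReal.ofReal ((X i x) ^ (e i).1 * (1 - X i x) ^ (e i).2) ∂μ
        = ∏ i ∈ s, ∫⁻ x, ENNReal.ofReal ((X i x) ^ (e i).1 * (1 - X i x) ^ (e i).2) ∂μ := by
    intro s e
    have hg : ∀ i, Measurable (fun x =>
        ENNReal.ofReal ((X i x) ^ (e i).1 * (1 - X i x) ^ (e i).2)) := by
      intro i
      exact ENNReal.measurable_ofReal.comp (((hmX i).pow measurable_const).mul
        ((measurable_const.sub (hmX i)).pow measurable_const))
    have hi : iIndepFun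
        (fun i x => ENNReal.ofReal ((X i x) ^ (e i).1 * (1 - X i x) ^ (e i).2)) μ :=
      hindepX.comp (fun i y => ENNReal.ofReal (y ^ (e i).1 * (1 - y) ^ (e i).2))
        (fun i => ENNReal.measurable_ofReal.comp (((measurable_id.pow measurable_const).mul
          ((measurable_const.sub measurable_id).pow measurable_const))))
    exact lintegral_prod_indep hg hi s
  -- term values
  have hXnn : ∀ i x, (0:ℝ) ≤ X i x := fun i x => (hbX i x).1
  have hXle : ∀ i x, (1:ℝ) - X i x ≥ 0 := fun i x => by linarith [(hbX i x).2]
  have hfacnn : ∀ (e : (ℕ ⊕ ℕ × ℕ) → ℕ × ℕ) i x,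
      (0:ℝ) ≤ (X i x) ^ (e i).1 * (1 - X i x) ^ (e i).2 := by
    intro e i x
    exact mul_nonneg (pow_nonneg (hXnn i x) _) (pow_nonneg (hXle i x) _)
  have hXl : ∀ (i : ℕ) (x : Ω), X (Sum.inl i) x = V' i x := fun _ _ => rfl
  have hXr : ∀ (a b : ℕ) (x : Ω), X (Sum.inr (a, b)) x = W' a b x := fun _ _ _ => rfl
  -- diagonal terms
  have hTdiag : ∀ k l, ∫⁻ x, ENNReal.ofReal (stick V' k x * stick V' k x *
        (stick (W' k) l x * stick (W' k) l x)) ∂μ = ENNReal.ofReal (tval α β k k l) := by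
    intro k l
    set e : (ℕ ⊕ ℕ × ℕ) → ℕ × ℕ := Sum.elim (fun i => if i = k then ((2:ℕ),(0:ℕ)) else (0,2))
      (fun p => if p.2 = l then ((2:ℕ),(0:ℕ)) else (0,2)) with hedef
    have hpt : ∀ x, stick V' k x * stick V' k x * (stick (W' k) l x * stick (W' k) l x)
        = ∏ i ∈ sdiag k l, ((X i x) ^ (e i).1 * (1 - X i x) ^ (e i).2) := by
      intro x
      rw [prod_sdiag k l (fun i => (X i x) ^ (e i).1 * (1 - X i x) ^ (e i).2)]
      have h1 : ∀ i ∈ range k, (X (Sum.inl i) x) ^ (e (Sum.inl i)).1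
          * (1 - X (Sum.inl i) x) ^ (e (Sum.inl i)).2 = (1 - V' i x) ^ 2 := by
        intro i hi
        have hik : i ≠ k := Nat.ne_of_lt (Finset.mem_range.mp hi)
        simp [hedef, hik, hXl]
      have h2 : ∀ b ∈ range l, (X (Sum.inr (k, b)) x) ^ (e (Sum.inr (k, b))).1
          * (1 - X (Sum.inr (k, b)) x) ^ (e (Sum.inr (k, b))).2 = (1 - W' k b x) ^ 2 := by
        intro b hb
        have hbl : b ≠ l := Nat.ne_of_lt (Finset.mem_range.mp hb)
        simp [hedef, hbl, hXr]
      rw [Finset.prod_congr rfl h1, Finset.prod_congr rfl h2, Finset.prod_pow, Finset.prod_pow]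
      have hek : e (Sum.inl k) = (2, 0) := by simp [hedef]
      have hekl : e (Sum.inr (k, l)) = (2, 0) := by simp [hedef]
      rw [hek, hekl]
      show stick V' k x * stick V' k x * (stick (W' k) l x * stick (W' k) l x)
          = ((V' k x) ^ 2 * (1 - V' k x) ^ 0 * (∏ i ∈ range k, (1 - V' i x)) ^ 2)
            * ((W' k l x) ^ 2 * (1 - W' k l x) ^ 0 * (∏ b ∈ range l, (1 - W' k b x)) ^ 2)
      unfold stick
      ring
    calc ∫⁻ x, ENNReal.ofReal (stick V' k x * stick V' k x *
          (stick (W' k) l x * stick (W' k) l x)) ∂μ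
        = ∫⁻ x, ∏ i ∈ sdiag k l,
            ENNReal.ofReal ((X i x) ^ (e i).1 * (1 - X i x) ^ (e i).2) ∂μ := by
          apply lintegral_congr
          intro x
          rw [hpt x, ENNReal.ofReal_prod_of_nonneg (fun i _ => hfacnn e i x)]
      _ = ∏ i ∈ sdiag k l, ∫⁻ x, ENNReal.ofReal ((X i x) ^ (e i).1 * (1 - X i x) ^ (e i).2) ∂μ :=
          hfact (sdiag k l) e
      _ = ∏ i ∈ sdiag k l, ENNReal.ofReal
            (mval (Sum.elim (fun _ : ℕ => α) (fun _ : ℕ × ℕ => β) i) (e i).1 (e i).2) := by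
          apply Finset.prod_congr rfl
          intro i _
          apply hmom
          rcases i with j | ⟨a, b⟩ <;> simp [hedef] <;> split <;> simp
      _ = ENNReal.ofReal (tval α β k k l) := by
          rw [prod_sdiag k l]
          have h1 : ∀ i ∈ range k, ENNReal.ofReal
              (mval (Sum.elim (fun _ : ℕ => α) (fun _ : ℕ × ℕ => β) (Sum.inl i))
                (e (Sum.inl i)).1 (e (Sum.inl i)).2) = ENNReal.ofReal (mval α 0 2) := by
            intro i hi
            have hik : i ≠ k := Nat.ne_of_lt (Finset.mem_range.mp hi)
            simp [hedef, hik]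
          have h2 : ∀ b ∈ range l, ENNReal.ofReal
              (mval (Sum.elim (fun _ : ℕ => α) (fun _ : ℕ × ℕ => β) (Sum.inr (k, b)))
                (e (Sum.inr (k, b))).1 (e (Sum.inr (k, b))).2) = ENNReal.ofReal (mval β 0 2) := by
            intro b hb
            have hbl : b ≠ l := Nat.ne_of_lt (Finset.mem_range.mp hb)
            simp [hedef, hbl]
          rw [Finset.prod_congr rfl h1, Finset.prod_congr rfl h2,
            Finset.prod_const, Finset.prod_const, Finset.card_range, Finset.card_range]
          have hek : e (Sum.inl k) = (2, 0) := by simp [hedef]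
          have hekl : e (Sum.inr (k, l)) = (2, 0) := by simp [hedef]
          rw [hek, hekl]
          simp only [Sum.elim_inl, Sum.elim_inr]
          rw [← ENNReal.ofReal_pow (mval_nonneg hα 0 2), ← ENNReal.ofReal_pow (mval_nonneg hβ 0 2),
            ← ENNReal.ofReal_mul (mval_nonneg hα 2 0),
            ← ENNReal.ofReal_mul (mval_nonneg hβ 2 0),
            ← ENNReal.ofReal_mul (mul_nonneg (mval_nonneg hα 2 0)
              (pow_nonneg (mval_nonneg hα 0 2) k))]
          congr 1
          simp only [mval, tval, eq_self_iff_true, if_true]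
          all_goals ring
  -- off-diagonal terms
  have hToff : ∀ k1 k2 l, k1 < k2 → ∫⁻ x, ENNReal.ofReal (stick V' k1 x * stick V' k2 x *
        (stick (W' k1) l x * stick (W' k2) l x)) ∂μ = ENNReal.ofReal (tval α β k1 k2 l) := by
    intro k1 k2 l hlt
    set e : (ℕ ⊕ ℕ × ℕ) → ℕ × ℕ := Sum.elim
      (fun i => if i = k1 then ((1:ℕ),(1:ℕ)) else if i = k2 then (1,0)
        else if i < k1 then (0,2) else (0,1))
      (fun p => if p.2 = l then ((1:ℕ),(0:ℕ)) else (0,1)) with hedef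
    have hek1 : e (Sum.inl k1) = (1, 1) := by simp [hedef]
    have hek2 : e (Sum.inl k2) = (1, 0) := by simp [hedef, Nat.ne_of_gt hlt, Nat.lt_asymm hlt]
    have heW : ∀ a, e (Sum.inr (a, l)) = (1, 0) := by intro a; simp [hedef]
    have hpt : ∀ x, stick V' k1 x * stick V' k2 x * (stick (W' k1) l x * stick (W' k2) l x)
        = ∏ i ∈ soff k1 k2 l, ((X i x) ^ (e i).1 * (1 - X i x) ^ (e i).2) := by
      intro x
      rw [prod_soff hlt l (fun i => (X i x) ^ (e i).1 * (1 - X i x) ^ (e i).2)]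
      have h1 : ∀ i ∈ range k1, (X (Sum.inl i) x) ^ (e (Sum.inl i)).1
          * (1 - X (Sum.inl i) x) ^ (e (Sum.inl i)).2 = (1 - V' i x) ^ 2 := by
        intro i hi
        have h := Finset.mem_range.mp hi
        simp [hedef, Nat.ne_of_lt h, Nat.ne_of_lt (h.trans hlt), h, hXl]
      have h2 : ∀ i ∈ Finset.Ico (k1+1) k2, (X (Sum.inl i) x) ^ (e (Sum.inl i)).1
          * (1 - X (Sum.inl i) x) ^ (e (Sum.inl i)).2 = 1 - V' i x := by
        intro i hi
        obtain ⟨ha, hb⟩ := Finset.mem_Ico.mp hi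
        simp [hedef, Nat.ne_of_gt (Nat.lt_of_succ_le ha), Nat.ne_of_lt hb,
          Nat.not_lt.mpr (Nat.le_of_succ_le ha), hXl]
      have h3 : ∀ (a : ℕ), ∀ b ∈ range l, (X (Sum.inr (a, b)) x) ^ (e (Sum.inr (a, b))).1
          * (1 - X (Sum.inr (a, b)) x) ^ (e (Sum.inr (a, b))).2 = 1 - W' a b x := by
        intro a b hb
        have hbl : b ≠ l := Nat.ne_of_lt (Finset.mem_range.mp hb)
        simp [hedef, hbl, hXr]
      rw [Finset.prod_congr rfl h1, Finset.prod_congr rfl h2, Finset.prod_congr rfl (h3 k1),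
        Finset.prod_congr rfl (h3 k2), Finset.prod_pow, hek1, hek2, heW k1, heW k2]
      have hsplitV : ∏ i ∈ range k2, (1 - V' i x)
          = ((∏ i ∈ range k1, (1 - V' i x)) * (1 - V' k1 x))
            * ∏ i ∈ Finset.Ico (k1+1) k2, (1 - V' i x) := by
        rw [Finset.range_eq_Ico,
          ← Finset.prod_Ico_consecutive (fun i => 1 - V' i x) (Nat.zero_le (k1+1)) hlt,
          Finset.prod_Ico_succ_top (Nat.zero_le k1), ← Finset.range_eq_Ico]
      show stick V' k1 x * stick V' k2 x * (stick (W' k1) l x * stick (W' k2) l x)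
          = ((V' k1 x) ^ 1 * (1 - V' k1 x) ^ 1 * ((V' k2 x) ^ 1 * (1 - V' k2 x) ^ 0)
              * (∏ i ∈ range k1, (1 - V' i x)) ^ 2 * ∏ i ∈ Finset.Ico (k1+1) k2, (1 - V' i x))
            * ((W' k1 l x) ^ 1 * (1 - W' k1 l x) ^ 0 * ∏ b ∈ range l, (1 - W' k1 b x))
            * ((W' k2 l x) ^ 1 * (1 - W' k2 l x) ^ 0 * ∏ b ∈ range l, (1 - W' k2 b x))
      unfold stick
      rw [hsplitV]
      ring
    calc ∫⁻ x, ENNReal.ofReal (stick V' k1 x * stick V' k2 x *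
          (stick (W' k1) l x * stick (W' k2) l x)) ∂μ
        = ∫⁻ x, ∏ i ∈ soff k1 k2 l,
            ENNReal.ofReal ((X i x) ^ (e i).1 * (1 - X i x) ^ (e i).2) ∂μ := by
          apply lintegral_congr
          intro x
          rw [hpt x, ENNReal.ofReal_prod_of_nonneg (fun i _ => hfacnn e i x)]
      _ = ∏ i ∈ soff k1 k2 l, ∫⁻ x, ENNReal.ofReal ((X i x) ^ (e i).1 * (1 - X i x) ^ (e i).2) ∂μ :=
          hfact (soff k1 k2 l) e
      _ = ∏ i ∈ soff k1 k2 l, ENNReal.ofReal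
            (mval (Sum.elim (fun _ : ℕ => α) (fun _ : ℕ × ℕ => β) i) (e i).1 (e i).2) := by
          apply Finset.prod_congr rfl
          intro i _
          apply hmom
          rcases i with j | ⟨a, b⟩ <;> simp [hedef] <;> split <;> (try split) <;>
            (try split) <;> simp
      _ = ENNReal.ofReal (tval α β k1 k2 l) := by
          rw [prod_soff hlt l]
          have h1 : ∀ i ∈ range k1, ENNReal.ofReal
              (mval (Sum.elim (fun _ : ℕ => α) (fun _ : ℕ × ℕ => β) (Sum.inl i))
                (e (Sum.inl i)).1 (e (Sum.inl i)).2) = ENNReal.ofReal (mval α 0 2) := by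
            intro i hi
            have h := Finset.mem_range.mp hi
            simp [hedef, Nat.ne_of_lt h, Nat.ne_of_lt (h.trans hlt), h]
          have h2 : ∀ i ∈ Finset.Ico (k1+1) k2, ENNReal.ofReal
              (mval (Sum.elim (fun _ : ℕ => α) (fun _ : ℕ × ℕ => β) (Sum.inl i))
                (e (Sum.inl i)).1 (e (Sum.inl i)).2) = ENNReal.ofReal (mval α 0 1) := by
            intro i hi
            obtain ⟨ha, hb⟩ := Finset.mem_Ico.mp hi
            simp [hedef, Nat.ne_of_gt (Nat.lt_of_succ_le ha), Nat.ne_of_lt hb,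
              Nat.not_lt.mpr (Nat.le_of_succ_le ha)]
          have h3 : ∀ (a : ℕ), ∀ b ∈ range l, ENNReal.ofReal
              (mval (Sum.elim (fun _ : ℕ => α) (fun _ : ℕ × ℕ => β) (Sum.inr (a, b)))
                (e (Sum.inr (a, b))).1 (e (Sum.inr (a, b))).2) = ENNReal.ofReal (mval β 0 1) := by
            intro a b hb
            have hbl : b ≠ l := Nat.ne_of_lt (Finset.mem_range.mp hb)
            simp [hedef, hbl]
          rw [Finset.prod_congr rfl h1, Finset.prod_congr rfl h2, Finset.prod_congr rfl (h3 k1),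
            Finset.prod_congr rfl (h3 k2), Finset.prod_const, Finset.prod_const,
            Finset.prod_const, Finset.card_range, Finset.card_range,
            Nat.card_Ico, hek1, hek2, heW k1, heW k2]
          simp only [Sum.elim_inl, Sum.elim_inr]
          have hmv : ∀ p q : ℕ, 0 ≤ mval α p q := fun p q => mval_nonneg hα p q
          have hmvb : ∀ p q : ℕ, 0 ≤ mval β p q := fun p q => mval_nonneg hβ p q
          have n1 : (0:ℝ) ≤ mval α 1 1 * mval α 1 0 := mul_nonneg (hmv 1 1) (hmv 1 0)
          have n2 : (0:ℝ) ≤ mval α 1 1 * mval α 1 0 * mval α 0 2 ^ k1 :=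
            mul_nonneg n1 (pow_nonneg (hmv 0 2) k1)
          have n3 : (0:ℝ) ≤ mval α 1 1 * mval α 1 0 * mval α 0 2 ^ k1
              * mval α 0 1 ^ (k2 - (k1+1)) := mul_nonneg n2 (pow_nonneg (hmv 0 1) _)
          have n4 : (0:ℝ) ≤ mval β 1 0 * mval β 0 1 ^ l :=
            mul_nonneg (hmvb 1 0) (pow_nonneg (hmvb 0 1) l)
          have n5 : (0:ℝ) ≤ mval α 1 1 * mval α 1 0 * mval α 0 2 ^ k1
              * mval α 0 1 ^ (k2 - (k1+1)) * (mval β 1 0 * mval β 0 1 ^ l) :=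
            mul_nonneg n3 n4
          rw [← ENNReal.ofReal_pow (hmv 0 2) k1, ← ENNReal.ofReal_pow (hmv 0 1) (k2 - (k1+1)),
            ← ENNReal.ofReal_pow (hmvb 0 1) l,
            ← ENNReal.ofReal_mul (hmvb 1 0),
            ← ENNReal.ofReal_mul (hmv 1 1),
            ← ENNReal.ofReal_mul n1,
            ← ENNReal.ofReal_mul n2,
            ← ENNReal.ofReal_mul n3,
            ← ENNReal.ofReal_mul n5]
          congr 1
          simp only [mval, tval, if_neg (Nat.ne_of_lt hlt), min_eq_left hlt.le,
            max_eq_right hlt.le, show k2 - (k1+1) = k2 - k1 - 1 by omega]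
          all_goals ring
  have hT : ∀ k1 k2 l, ∫⁻ x, ENNReal.ofReal (stick V' k1 x * stick V' k2 x *
        (stick (W' k1) l x * stick (W' k2) l x)) ∂μ = ENNReal.ofReal (tval α β k1 k2 l) := by
    intro k1 k2 l
    rcases lt_trichotomy k1 k2 with h | h | h
    · exact hToff k1 k2 l h
    · subst h; exact hTdiag k1 l
    · have hswap : ∀ x, stick V' k1 x * stick V' k2 x * (stick (W' k1) l x * stick (W' k2) l x)
          = stick V' k2 x * stick V' k1 x * (stick (W' k2) l x * stick (W' k1) l x) := by
        intro x; ring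
      calc ∫⁻ x, ENNReal.ofReal (stick V' k1 x * stick V' k2 x *
            (stick (W' k1) l x * stick (W' k2) l x)) ∂μ
          = ∫⁻ x, ENNReal.ofReal (stick V' k2 x * stick V' k1 x *
              (stick (W' k2) l x * stick (W' k1) l x)) ∂μ := by
            apply lintegral_congr
            intro x
            rw [hswap x]
        _ = ENNReal.ofReal (tval α β k2 k1 l) := hToff k2 k1 l h
        _ = ENNReal.ofReal (tval α β k1 k2 l) := by rw [tval_comm α β k2 k1 l]
  -- pointwise summability facts
  have hsumV : ∀ x, Summable (fun k => stick V' k x) := fun x => stick_summable (hbV' x)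
  have htsumV : ∀ x, ∑' k, stick V' k x ≤ 1 := fun x => tsum_stick_le_one (hbV' x)
  have hsnnV : ∀ x k, 0 ≤ stick V' k x := fun x k => stick_nonneg (hbV' x) k
  have hsleV : ∀ x k, stick V' k x ≤ 1 := fun x k => stick_le_one (hbV' x) k
  have hsnnW : ∀ k x l, 0 ≤ stick (W' k) l x := fun k x l => stick_nonneg (hbW' k x) l
  have hsleW : ∀ k x l, stick (W' k) l x ≤ 1 := fun k x l => stick_le_one (hbW' k x) l
  have hwsum : ∀ k1 k2 x, Summable (fun l => stick (W' k1) l x * stick (W' k2) l x) := by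
    intro k1 k2 x
    apply Summable.of_nonneg_of_le (fun l => mul_nonneg (hsnnW k1 x l) (hsnnW k2 x l))
      (fun l => ?_) (stick_summable (hbW' k1 x))
    calc stick (W' k1) l x * stick (W' k2) l x ≤ stick (W' k1) l x * 1 := by
          gcongr
          · exact hsnnW k1 x l
          · exact hsleW k2 x l
      _ = stick (W' k1) l x := mul_one _
  have hInn : ∀ k1 k2 x, 0 ≤ ∑' l, stick (W' k1) l x * stick (W' k2) l x :=
    fun k1 k2 x => tsum_nonneg (fun l => mul_nonneg (hsnnW k1 x l) (hsnnW k2 x l))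
  have hIle : ∀ k1 k2 x, (∑' l, stick (W' k1) l x * stick (W' k2) l x) ≤ 1 := by
    intro k1 k2 x
    calc (∑' l, stick (W' k1) l x * stick (W' k2) l x) ≤ ∑' l, stick (W' k1) l x := by
          apply Summable.tsum_le_tsum _ (hwsum k1 k2 x) (stick_summable (hbW' k1 x))
          intro l
          calc stick (W' k1) l x * stick (W' k2) l x ≤ stick (W' k1) l x * 1 := by
                gcongr
                · exact hsnnW k1 x l
                · exact hsleW k2 x l
            _ = stick (W' k1) l x := mul_one _
      _ ≤ 1 := tsum_stick_le_one (hbW' k1 x)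
  -- the inner summand
  set F : ℕ → ℕ → Ω → ℝ := fun k1 k2 x => stick V' k1 x * stick V' k2 x *
      ∑' l, stick (W' k1) l x * stick (W' k2) l x with hFdef
  have hFnn : ∀ k1 k2 x, 0 ≤ F k1 k2 x := fun k1 k2 x =>
    mul_nonneg (mul_nonneg (hsnnV x k1) (hsnnV x k2)) (hInn k1 k2 x)
  have hFle : ∀ k1 k2 x, F k1 k2 x ≤ stick V' k1 x * stick V' k2 x := by
    intro k1 k2 x
    calc F k1 k2 x ≤ stick V' k1 x * stick V' k2 x * 1 := by
          apply mul_le_mul_of_nonneg_left (hIle k1 k2 x)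
            (mul_nonneg (hsnnV x k1) (hsnnV x k2))
      _ = _ := mul_one _
  have hsumF : ∀ k1 x, Summable (fun k2 => F k1 k2 x) := by
    intro k1 x
    apply Summable.of_nonneg_of_le (fun k2 => hFnn k1 k2 x) (fun k2 => ?_)
      ((hsumV x).mul_left (stick V' k1 x))
    exact hFle k1 k2 x
  set G : ℕ → Ω → ℝ := fun k1 x => ∑' k2, F k1 k2 x with hGdef
  have hGnn : ∀ k1 x, 0 ≤ G k1 x := fun k1 x => tsum_nonneg (fun k2 => hFnn k1 k2 x)
  have hGle : ∀ k1 x, G k1 x ≤ stick V' k1 x := by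
    intro k1 x
    calc G k1 x ≤ ∑' k2, stick V' k1 x * stick V' k2 x :=
          Summable.tsum_le_tsum (fun k2 => hFle k1 k2 x) (hsumF k1 x)
            ((hsumV x).mul_left (stick V' k1 x))
      _ = stick V' k1 x * ∑' k2, stick V' k2 x := tsum_mul_left
      _ ≤ stick V' k1 x * 1 := by
          apply mul_le_mul_of_nonneg_left (htsumV x) (hsnnV x k1)
      _ = _ := mul_one _
  have hsumG : ∀ x, Summable (fun k1 => G k1 x) := by
    intro x
    exact Summable.of_nonneg_of_le (fun k1 => hGnn k1 x) (fun k1 => hGle k1 x) (hsumV x)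
  -- measurability
  have hmW2 : ∀ k1 k2, Measurable (fun x => ∑' l, stick (W' k1) l x * stick (W' k2) l x) := by
    intro k1 k2
    apply measurable_tsum_nonneg
    · intro l
      exact (stick_measurable (hmW' k1) l).mul (stick_measurable (hmW' k2) l)
    · intro l x
      exact mul_nonneg (hsnnW k1 x l) (hsnnW k2 x l)
  have hmF : ∀ k1 k2, Measurable (F k1 k2) := by
    intro k1 k2
    exact ((stick_measurable hmV' k1).mul (stick_measurable hmV' k2)).mul (hmW2 k1 k2)
  have hmG : ∀ k1, Measurable (G k1) := by
    intro k1
    exact measurable_tsum_nonneg (fun k2 => hmF k1 k2) (fun k2 x => hFnn k1 k2 x)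
  -- step A : replace V, W by V', W' a.e.
  have hae : ∀ᵐ x ∂μ, (∑' (k1 : ℕ) (k2 : ℕ), stick V k1 x * stick V k2 x *
      ∑' l : ℕ, stick (W k1) l x * stick (W k2) l x) = ∑' k1, G k1 x := by
    have hVall : ∀ᵐ x ∂μ, ∀ k, V' k x = V k x := by
      rw [ae_all_iff]; exact fun k => haeV k
    have hWall : ∀ᵐ x ∂μ, ∀ p : ℕ × ℕ, W' p.1 p.2 x = W p.1 p.2 x := by
      rw [ae_all_iff]; exact fun p => haeW p.1 p.2
    filter_upwards [hVall, hWall] with x hV hW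
    have hstV : ∀ k, stick V k x = stick V' k x := by
      intro k
      unfold stick
      rw [hV k]
      congr 1
      exact Finset.prod_congr rfl (fun i _ => by rw [hV i])
    have hstW : ∀ k l, stick (W k) l x = stick (W' k) l x := by
      intro k l
      unfold stick
      rw [hW (k, l)]
      congr 1
      exact Finset.prod_congr rfl (fun i _ => by rw [hW (k, i)])
    apply tsum_congr
    intro k1
    apply tsum_congr
    intro k2
    rw [hstV k1, hstV k2]
    congr 1
    exact tsum_congr (fun l => by rw [hstW k1 l, hstW k2 l])
  rw [integral_congr_ae hae]
  -- step B : to lintegral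
  have hmtot : Measurable (fun x => ∑' k1, G k1 x) :=
    measurable_tsum_nonneg hmG (fun k1 x => hGnn k1 x)
  rw [integral_eq_lintegral_of_nonneg_ae
    (Filter.Eventually.of_forall (fun x => tsum_nonneg (fun k1 => hGnn k1 x)))
    hmtot.aestronglyMeasurable]
  -- step C : push ofReal through the sums
  have hC : ∫⁻ x, ENNReal.ofReal (∑' k1, G k1 x) ∂μ
      = ∑' (k1 : ℕ) (k2 : ℕ) (l : ℕ), ∫⁻ x, ENNReal.ofReal (stick V' k1 x * stick V' k2 x *
          (stick (W' k1) l x * stick (W' k2) l x)) ∂μ := by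
    have hptG : ∀ x, ENNReal.ofReal (∑' k1, G k1 x) = ∑' k1, ENNReal.ofReal (G k1 x) :=
      fun x => ENNReal.ofReal_tsum_of_nonneg (fun k1 => hGnn k1 x) (hsumG x)
    have hptF : ∀ k1 x, ENNReal.ofReal (G k1 x) = ∑' k2, ENNReal.ofReal (F k1 k2 x) :=
      fun k1 x => ENNReal.ofReal_tsum_of_nonneg (fun k2 => hFnn k1 k2 x) (hsumF k1 x)
    have hptL : ∀ k1 k2 x, ENNReal.ofReal (F k1 k2 x)
        = ∑' l, ENNReal.ofReal (stick V' k1 x * stick V' k2 x *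
            (stick (W' k1) l x * stick (W' k2) l x)) := by
      intro k1 k2 x
      have h1 : ENNReal.ofReal (F k1 k2 x) = ENNReal.ofReal (stick V' k1 x * stick V' k2 x)
          * ENNReal.ofReal (∑' l, stick (W' k1) l x * stick (W' k2) l x) :=
        ENNReal.ofReal_mul (mul_nonneg (hsnnV x k1) (hsnnV x k2))
      rw [h1, ENNReal.ofReal_tsum_of_nonneg
        (fun l => mul_nonneg (hsnnW k1 x l) (hsnnW k2 x l)) (hwsum k1 k2 x),
        ← ENNReal.tsum_mul_left]
      apply tsum_congr
      intro l
      rw [← ENNReal.ofReal_mul (mul_nonneg (hsnnV x k1) (hsnnV x k2))]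
    have hmofF : ∀ k1 k2, Measurable fun x => ENNReal.ofReal (F k1 k2 x) :=
      fun k1 k2 => ENNReal.measurable_ofReal.comp (hmF k1 k2)
    calc ∫⁻ x, ENNReal.ofReal (∑' k1, G k1 x) ∂μ
        = ∫⁻ x, ∑' k1, ENNReal.ofReal (G k1 x) ∂μ := lintegral_congr (fun x => hptG x)
      _ = ∑' k1, ∫⁻ x, ENNReal.ofReal (G k1 x) ∂μ :=
          lintegral_tsum (fun k1 => (ENNReal.measurable_ofReal.comp (hmG k1)).aemeasurable)
      _ = ∑' (k1 : ℕ) (k2 : ℕ) (l : ℕ), ∫⁻ x, ENNReal.ofReal (stick V' k1 x * stick V' k2 x *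
            (stick (W' k1) l x * stick (W' k2) l x)) ∂μ := by
          apply tsum_congr
          intro k1
          calc ∫⁻ x, ENNReal.ofReal (G k1 x) ∂μ
              = ∫⁻ x, ∑' k2, ENNReal.ofReal (F k1 k2 x) ∂μ :=
                lintegral_congr (fun x => hptF k1 x)
            _ = ∑' k2, ∫⁻ x, ENNReal.ofReal (F k1 k2 x) ∂μ :=
                lintegral_tsum (fun k2 => (hmofF k1 k2).aemeasurable)
            _ = _ := by
                apply tsum_congr
                intro k2
                calc ∫⁻ x, ENNReal.ofReal (F k1 k2 x) ∂μ
                    = ∫⁻ x, ∑' l, ENNReal.ofReal (stick V' k1 x * stick V' k2 x *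
                        (stick (W' k1) l x * stick (W' k2) l x)) ∂μ :=
                      lintegral_congr (fun x => hptL k1 k2 x)
                  _ = _ := by
                      apply lintegral_tsum
                      intro l
                      apply Measurable.aemeasurable
                      apply ENNReal.measurable_ofReal.comp
                      exact ((stick_measurable hmV' k1).mul (stick_measurable hmV' k2)).mul
                        ((stick_measurable (hmW' k1) l).mul (stick_measurable (hmW' k2) l))
  rw [hC]
  have hsums : ∑' (k1 : ℕ) (k2 : ℕ) (l : ℕ), ∫⁻ x, ENNReal.ofReal (stick V' k1 x *
        stick V' k2 x * (stick (W' k1) l x * stick (W' k2) l x)) ∂μ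
      = ENNReal.ofReal (1/(1+α) * (1/(1+β)) + α/(1+α) * (1/(2*β+1))) := by
    have h1 : ∀ k1 k2 l : ℕ, ∫⁻ x, ENNReal.ofReal (stick V' k1 x * stick V' k2 x *
        (stick (W' k1) l x * stick (W' k2) l x)) ∂μ = ENNReal.ofReal (tval α β k1 k2 l) :=
      fun k1 k2 l => hT k1 k2 l
    calc ∑' (k1 : ℕ) (k2 : ℕ) (l : ℕ), ∫⁻ x, ENNReal.ofReal (stick V' k1 x * stick V' k2 x *
          (stick (W' k1) l x * stick (W' k2) l x)) ∂μ
        = ∑' (k1 : ℕ) (k2 : ℕ) (l : ℕ), ENNReal.ofReal (tval α β k1 k2 l) :=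
          tsum_congr (fun k1 => tsum_congr (fun k2 => tsum_congr (fun l => h1 k1 k2 l)))
      _ = _ := final_sum hα hβ
  rw [hsums, ENNReal.toReal_ofReal (by positivity)]
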